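/- Suppose x⁰ ∈ ℝ^n and u⁰ ∈ ℝ^m satisfy f(x⁰,u⁰) = 0 and h(x⁰,u⁰) ≤ 0, and set b⁰ := A x⁰. Then P(b⁰) = {x⁰}, K g(Cx⁰, u⁰) = b⁰, and L ψ(Cx⁰, u⁰) ≤ 0. Consequently, the choices b = b⁰, Gᵘ = Gˡ = g(Cx⁰,u⁰), Ψᵘ = Ψˡ = ψ(Cx⁰,u⁰) satisfy K⁺Gᵘ + K⁻Gˡ ≤ b and L⁺Ψᵘ + L⁻Ψˡ ≤ 0; i.e., the convex restriction is nonempty and contains the nominal point u⁰. -/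

import Mathlib

open Matrix

/-- First part of Lemma 3.4 (Non-emptiness of Convex Restriction): if `(x⁰,u⁰)` is a
nominal feasible point, then with `b⁰ = A x⁰` we get `P(b⁰) = {x⁰}`, `K g(Cx⁰,u⁰) = b⁰`,
`L ψ(Cx⁰,u⁰) ≤ 0`, and the convex restriction conditions hold with the trivial envelopes
`Gᵘ = Gˡ = g(Cx⁰,u⁰)` and `Ψᵘ = Ψˡ = ψ(Cx⁰,u⁰)`. -/

private lemma mulVec_inj_of_rank {q n : ℕ} (C : Matrix (Fin q) (Fin n) ℝ)
    (hC : C.rank = n) : Function.Injective C.mulVec := by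
  have h1 := C.mulVecLin.finrank_range_add_finrank_ker
  rw [Matrix.rank] at hC
  rw [hC, Module.finrank_pi, Fintype.card_fin] at h1
  have hker : Module.finrank ℝ (LinearMap.ker C.mulVecLin) = 0 := by omega
  have hbot : LinearMap.ker C.mulVecLin = ⊥ := Submodule.finrank_eq_zero.mp hker
  have := LinearMap.ker_eq_bot.mp hbot
  exact this

theorem convex_restriction_nonempty {n m p q s : ℕ}
    (hn : 0 < n) (hm : 0 < m) (hp : 0 < p) (hq : 0 < q) (hs : 0 < s)
    (M : Matrix (Fin n) (Fin p) ℝ) (L : Matrix (Fin s) (Fin p) ℝ)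
    (C : Matrix (Fin q) (Fin n) ℝ) (Λ : Matrix (Fin p) (Fin q) ℝ)
    (hC : C.rank = n) (hinv : IsUnit (M * Λ * C).det)
    (ψ : (Fin q → ℝ) → (Fin m → ℝ) → (Fin p → ℝ))
    (hψ : Continuous fun zu : (Fin q → ℝ) × (Fin m → ℝ) => ψ zu.1 zu.2)
    (f : (Fin n → ℝ) → (Fin m → ℝ) → (Fin n → ℝ))
    (hf : ∀ x u, f x u = M.mulVec (ψ (C.mulVec x) u))
    (h : (Fin n → ℝ) → (Fin m → ℝ) → (Fin s → ℝ))
    (hh : ∀ x u, h x u = L.mulVec (ψ (C.mulVec x) u))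
    (g : (Fin q → ℝ) → (Fin m → ℝ) → (Fin p → ℝ))
    (hg : ∀ z u, g z u = ψ z u - Λ.mulVec z)
    (A : Matrix (Fin q ⊕ Fin q) (Fin n) ℝ) (hA : A = Matrix.fromRows C (-C))
    (K : Matrix (Fin q ⊕ Fin q) (Fin p) ℝ) (hK : K = -(A * (M * Λ * C)⁻¹ * M))
    (Kpos Kneg : Matrix (Fin q ⊕ Fin q) (Fin p) ℝ)
    (hKpos : ∀ i j, Kpos i j = max (K i j) 0) (hKneg : ∀ i j, Kneg i j = min (K i j) 0)
    (Lpos Lneg : Matrix (Fin s) (Fin p) ℝ)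
    (hLpos : ∀ i j, Lpos i j = max (L i j) 0) (hLneg : ∀ i j, Lneg i j = min (L i j) 0)
    (x0 : Fin n → ℝ) (u0 : Fin m → ℝ)
    (hfeas0 : f x0 u0 = 0) (hineq0 : h x0 u0 ≤ 0) :
    {x : Fin n → ℝ | ∀ i, A.mulVec x i ≤ A.mulVec x0 i} = {x0} ∧
    K.mulVec (g (C.mulVec x0) u0) = A.mulVec x0 ∧
    L.mulVec (ψ (C.mulVec x0) u0) ≤ 0 ∧
    (∀ i, Kpos.mulVec (g (C.mulVec x0) u0) i + Kneg.mulVec (g (C.mulVec x0) u0) i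
        ≤ A.mulVec x0 i) ∧
    (∀ j, Lpos.mulVec (ψ (C.mulVec x0) u0) j + Lneg.mulVec (ψ (C.mulVec x0) u0) j ≤ 0) := by
  have hMψ : M.mulVec (ψ (C.mulVec x0) u0) = 0 := by rw [← hf]; exact hfeas0
  have hLψ : L.mulVec (ψ (C.mulVec x0) u0) ≤ 0 := by rw [← hh]; exact hineq0
  have hNinv : (M * Λ * C)⁻¹ * (M * Λ * C) = 1 := Matrix.nonsing_inv_mul _ hinv
  have hKg : K.mulVec (g (C.mulVec x0) u0) = A.mulVec x0 := by
    rw [hK, hg, Matrix.neg_mulVec, Matrix.mulVec_sub]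
    have h1 : (A * (M * Λ * C)⁻¹ * M).mulVec (ψ (C.mulVec x0) u0) = 0 := by
      rw [Matrix.mul_assoc A ((M * Λ * C)⁻¹) M, ← Matrix.mulVec_mulVec,
        ← Matrix.mulVec_mulVec, hMψ, Matrix.mulVec_zero, Matrix.mulVec_zero]
    have hAeq : A * (M * Λ * C)⁻¹ * M * Λ * C = A := by
      rw [Matrix.mul_assoc (A * (M * Λ * C)⁻¹) M Λ,
        Matrix.mul_assoc (A * (M * Λ * C)⁻¹) (M * Λ) C,
        Matrix.mul_assoc A ((M * Λ * C)⁻¹) (M * Λ * C), hNinv, Matrix.mul_one]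
    have h2 : (A * (M * Λ * C)⁻¹ * M).mulVec (Λ.mulVec (C.mulVec x0))
        = A.mulVec x0 := by
      rw [Matrix.mulVec_mulVec, Matrix.mulVec_mulVec, hAeq]
    rw [h1, h2]
    simp
  have hset : {x : Fin n → ℝ | ∀ i, A.mulVec x i ≤ A.mulVec x0 i} = {x0} := by
    ext x
    simp only [Set.mem_setOf_eq, Set.mem_singleton_iff]
    constructor
    · intro hx
      have hCeq : C.mulVec x = C.mulVec x0 := by
        funext i
        have h1 := hx (Sum.inl i)
        have h2 := hx (Sum.inr i)
        rw [hA] at h1 h2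
        simp only [Matrix.fromRows_mulVec, Sum.elim_inl, Sum.elim_inr,
          Matrix.neg_mulVec, Pi.neg_apply] at h1 h2
        linarith
      exact mulVec_inj_of_rank C hC hCeq
    · intro hx; subst hx; intro i; exact le_refl _
  refine ⟨hset, hKg, hLψ, ?_, ?_⟩
  · intro i
    have heq : Kpos.mulVec (g (C.mulVec x0) u0) i + Kneg.mulVec (g (C.mulVec x0) u0) i
        = K.mulVec (g (C.mulVec x0) u0) i := by
      simp only [Matrix.mulVec, dotProduct, ← Finset.sum_add_distrib]
      refine Finset.sum_congr rfl fun j _ => ?_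
      rw [hKpos, hKneg, ← add_mul, max_add_min, add_zero]
    rw [heq, hKg]
  · intro j
    have heq : Lpos.mulVec (ψ (C.mulVec x0) u0) j + Lneg.mulVec (ψ (C.mulVec x0) u0) j
        = L.mulVec (ψ (C.mulVec x0) u0) j := by
      simp only [Matrix.mulVec, dotProduct, ← Finset.sum_add_distrib]
      refine Finset.sum_congr rfl fun k _ => ?_
      rw [hLpos, hLneg, ← add_mul, max_add_min, add_zero]
    rw [heq]
    exact hLψ j
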